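/- Consider the two-strategy game (r = 2) on a graph with n = |V| vertices, and let ε > 0. Let s : V → Fin 2 be a strategy profile that is stable under good-enough improvements, i.e., for every vertex i, if s^(i) denotes the profile obtained from s by flipping i's strategy, then Φ₁(s^(i)) − Φ₁(s) ≤ (2ε/n) · Φ₁(s). Then (2 + ε) · Φ₁(s) ≥ W, where W = Σ over unordered pairs {i,j} of t(i,j) is the total tie-strength. -/
import Mathlib


open Finset

/-- Tie-strength of a pair of vertices: for adjacent pairs it is the edge weight plus the
sum, over common neighbours `k`, of `w i k + w j k`; it is `0` for non-adjacent pairs. -/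
noncomputable def tieStrength {V : Type*} [Fintype V] (G : SimpleGraph V) [DecidableRel G.Adj]
    (w : V → V → ℝ) (i j : V) : ℝ :=
  if G.Adj i j then
    w i j + ∑ k : V, (if G.Adj i k ∧ G.Adj j k then w i k + w j k else 0)
  else 0

/-- `t_i`: the sum of the tie-strengths of the edges adjacent to `i`. -/
noncomputable def tieTotal {V : Type*} [Fintype V] (G : SimpleGraph V) [DecidableRel G.Adj]
    (w : V → V → ℝ) (i : V) : ℝ :=
  ∑ j : V, tieStrength G w i j

/-- The agreement weight `a_i(s)` of vertex `i` in profile `s`: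
the sum of tie-strengths `t(i,j)` over the vertices `j` choosing the same strategy as `i`. -/
noncomputable def agreeWeight {V : Type*} [Fintype V] (G : SimpleGraph V) [DecidableRel G.Adj]
    (w : V → V → ℝ) {r : ℕ} (s : V → Fin r) (i : V) : ℝ :=
  ∑ j : V, if s j = s i then tieStrength G w i j else 0

/-- The utility `u_i(s) = a_i(s) / t_i` of player `i`. -/
noncomputable def utility1 {V : Type*} [Fintype V] (G : SimpleGraph V) [DecidableRel G.Adj]
    (w : V → V → ℝ) {r : ℕ} (s : V → Fin r) (i : V) : ℝ :=
  agreeWeight G w s i / tieTotal G w i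

/-- The potential `Φ₁(s)`: the sum of tie-strengths over unordered edges whose endpoints
choose the same strategy, i.e. `(1/2) Σ_i Σ_{j : s j = s i} t(i,j)`. -/
noncomputable def phi1 {V : Type*} [Fintype V] (G : SimpleGraph V) [DecidableRel G.Adj]
    (w : V → V → ℝ) {r : ℕ} (s : V → Fin r) : ℝ :=
  (1 / 2) * ∑ i : V, ∑ j : V, if s j = s i then tieStrength G w i j else 0

/-- The total tie-strength `W` of the network: the sum of `t(i,j)` over unordered pairs. -/
noncomputable def totalTie {V : Type*} [Fintype V] (G : SimpleGraph V) [DecidableRel G.Adj]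
    (w : V → V → ℝ) : ℝ :=
  (1 / 2) * ∑ i : V, ∑ j : V, tieStrength G w i j

lemma tieStrength_symm {V : Type*} [Fintype V] (G : SimpleGraph V) [DecidableRel G.Adj]
    (w : V → V → ℝ) (hw_symm : ∀ i j, w i j = w j i) (i j : V) :
    tieStrength G w i j = tieStrength G w j i := by
  unfold tieStrength
  by_cases h : G.Adj i j
  · rw [if_pos h, if_pos h.symm, hw_symm i j]
    congr 1
    apply Finset.sum_congr rfl
    intro k _
    have : (G.Adj i k ∧ G.Adj j k) ↔ (G.Adj j k ∧ G.Adj i k) := and_comm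
    simp only [this, add_comm]
  · rw [if_neg h, if_neg (fun h' => h h'.symm)]

lemma tieStrength_diag {V : Type*} [Fintype V] (G : SimpleGraph V) [DecidableRel G.Adj]
    (w : V → V → ℝ) (i : V) : tieStrength G w i i = 0 := by
  simp [tieStrength]

lemma double_sum_special {V : Type*} [Fintype V] [DecidableEq V] (d : V → V → ℝ) (i : V)
    (hsymm : ∀ a b, d a b = d b a)
    (hz : ∀ a b, a ≠ i → b ≠ i → d a b = 0)
    (hii : d i i = 0) :
    ∑ a : V, ∑ b : V, d a b = 2 * ∑ b : V, d i b := by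
  have h1 : ∑ a : V, ∑ b : V, d a b
      = (∑ b : V, d i b) + ∑ a ∈ Finset.univ.erase i, ∑ b : V, d a b :=
    (Finset.add_sum_erase _ _ (mem_univ i)).symm
  have h2 : ∀ a ∈ Finset.univ.erase i, ∑ b : V, d a b = d a i := by
    intro a ha
    have ha' : a ≠ i := (Finset.mem_erase.1 ha).1
    apply Finset.sum_eq_single i
    · intro b _ hb; exact hz a b ha' hb
    · intro h; exact absurd (mem_univ i) h
  rw [h1, Finset.sum_congr rfl h2]
  have h3 : ∑ a ∈ Finset.univ.erase i, d a i = ∑ a : V, d a i - d i i := by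
    rw [← Finset.add_sum_erase _ (fun a => d a i) (mem_univ i)]; ring
  rw [h3, hii]
  have : ∑ a : V, d a i = ∑ b : V, d i b := Finset.sum_congr rfl (fun a _ => hsymm a i)
  rw [this]; ring

lemma phi_flip {V : Type*} [Fintype V] [DecidableEq V]
    (G : SimpleGraph V) [DecidableRel G.Adj] (w : V → V → ℝ)
    (hw_symm : ∀ i j, w i j = w j i)
    (s : V → Fin 2) (i : V) (c : Fin 2) (hc : c ≠ s i) :
    phi1 G w (Function.update s i c) - phi1 G w s
      = tieTotal G w i - 2 * agreeWeight G w s i := by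
  set t := tieStrength G w with ht
  set s' := Function.update s i c with hs'
  set d : V → V → ℝ := fun a b =>
    (if s' b = s' a then t a b else 0) - (if s b = s a then t a b else 0) with hd
  have hts : ∀ a b, t a b = t b a := tieStrength_symm G w hw_symm
  have htd : ∀ a, t a a = 0 := tieStrength_diag G w
  have hsymm : ∀ a b, d a b = d b a := by
    intro a b
    simp only [hd]
    rw [hts a b]
    congr 1
    · exact if_congr eq_comm rfl rfl
    · exact if_congr eq_comm rfl rfl
  have hz : ∀ a b, a ≠ i → b ≠ i → d a b = 0 := by
    intro a b ha hb
    simp [hd, hs', Function.update_of_ne ha, Function.update_of_ne hb]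
  have hii : d i i = 0 := by simp [hd, htd]
  have hrow : ∀ b, d i b
      = (if s b = c then t i b else 0) - (if s b = s i then t i b else 0) := by
    intro b
    by_cases hb : b = i
    · subst hb
      have h1 : ¬ (s b = c) := fun h => hc h.symm
      simp [hd, htd, h1]
    · simp [hd, hs', Function.update_of_ne hb, Function.update_self]
  have hstep : phi1 G w s' - phi1 G w s = ∑ b : V, d i b := by
    unfold phi1
    rw [← mul_sub, ← Finset.sum_sub_distrib]
    have : ∀ a : V, ((∑ j : V, if s' j = s' a then tieStrength G w a j else 0)
        - ∑ j : V, if s j = s a then tieStrength G w a j else 0) = ∑ b : V, d a b := by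
      intro a
      rw [← Finset.sum_sub_distrib]
    rw [Finset.sum_congr rfl (fun a _ => this a),
      double_sum_special d i hsymm hz hii]
    ring
  rw [hstep, Finset.sum_congr rfl (fun b _ => hrow b), Finset.sum_sub_distrib]
  have hfin : ∀ x : Fin 2, (x = c) ↔ ¬ (x = s i) := by
    have h : ∀ y z x : Fin 2, z ≠ y → ((x = z) ↔ ¬ (x = y)) := by decide
    exact fun x => h (s i) c x hc
  have h2 : ∀ b : V, (if s b = c then t i b else 0)
      = t i b - (if s b = s i then t i b else 0) := by
    intro b
    by_cases hb : s b = s i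
    · rw [if_pos hb, if_neg (fun h => ((hfin (s b)).1 h) hb)]; ring
    · rw [if_pos ((hfin (s b)).2 hb), if_neg hb]; ring
  rw [Finset.sum_congr rfl (fun b _ => h2 b), Finset.sum_sub_distrib]
  unfold tieTotal agreeWeight
  ring

/-- In the two-strategy game (`r = 2`), if `s` is stable under
good-enough improvements, i.e. flipping any single vertex's strategy increases `Φ₁` by at
most `(2ε/n)·Φ₁(s)`, then `(2 + ε)·Φ₁(s) ≥ W` where `W` is the total tie-strength. -/
theorem good_enough_stable_phi1_bound {V : Type*} [Fintype V] [DecidableEq V]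
    (G : SimpleGraph V) [DecidableRel G.Adj] (w : V → V → ℝ)
    (hw_nonneg : ∀ i j, 0 ≤ w i j)
    (hw_symm : ∀ i j, w i j = w j i)
    (hw_diag : ∀ i, w i i = 0)
    (hw_adj : ∀ i j, ¬ G.Adj i j → w i j = 0)
    (hn : 1 ≤ Fintype.card V)
    (ε : ℝ) (hε : 0 < ε)
    (s : V → Fin 2)
    (hstable : ∀ i : V,
      phi1 G w (Function.update s i (s i + 1)) - phi1 G w s
        ≤ (2 * ε / (Fintype.card V : ℝ)) * phi1 G w s) :
    (2 + ε) * phi1 G w s ≥ totalTie G w := by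
  have hcne : ∀ x : Fin 2, x + 1 ≠ x := by decide
  have hkey : ∀ i, tieTotal G w i - 2 * agreeWeight G w s i
      ≤ (2 * ε / (Fintype.card V : ℝ)) * phi1 G w s := by
    intro i
    rw [← phi_flip G w hw_symm s i (s i + 1) (hcne (s i))]
    exact hstable i
  have hsum := Finset.sum_le_sum (fun i (_ : i ∈ Finset.univ) => hkey i)
  rw [Finset.sum_const, Finset.card_univ, nsmul_eq_mul] at hsum
  have hL : ∑ i : V, (tieTotal G w i - 2 * agreeWeight G w s i)
      = 2 * totalTie G w - 4 * phi1 G w s := by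
    rw [Finset.sum_sub_distrib, ← Finset.mul_sum]
    unfold tieTotal agreeWeight totalTie phi1
    ring
  rw [hL] at hsum
  have hn0 : (Fintype.card V : ℝ) ≠ 0 := by positivity
  have hR : (Fintype.card V : ℝ) * (2 * ε / (Fintype.card V : ℝ) * phi1 G w s)
      = 2 * ε * phi1 G w s := by field_simp
  rw [hR] at hsum
  linarith
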